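/- arXiv:1807.06527 — 4 statements merged into one kernel-verified Lean document; each statement's English description precedes it below -/
import Mathlib

section
/- For every positive integer b and every integer n ≥ 2b, the quantity z_{b,n} is non-increasing in n, i.e. z_{b,n+1} ≤ z_{b,n} for all n ≥ 2b. -/
open Finset

/-- `p b n = P(Bin(n, b/n) < b)`. -/
noncomputable def binP (b n : ℕ) : ℝ :=
  ∑ i ∈ Finset.range b, (n.choose i : ℝ) * ((b : ℝ) / n) ^ i * (1 - (b : ℝ) / n) ^ (n - i)

/-- `z b n = (1/2 - p b n) / P(Bin(n, b/n) = b)`. -/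
noncomputable def binZ (b n : ℕ) : ℝ :=
  (1 / 2 - binP b n) / ((n.choose b : ℝ) * ((b : ℝ) / n) ^ b * (1 - (b : ℝ) / n) ^ (n - b))

namespace ZAux

/-- `Q b n = P(Bin(n, b/n) = b)`. -/
noncomputable def QQ (b n : ℕ) : ℝ :=
  (n.choose b : ℝ) * ((b : ℝ) / n) ^ b * (1 - (b : ℝ) / n) ^ (n - b)

/-- `g` is the auxiliary function `f_n(b-1,θ) + f_n(b,θ)` (with the pmf of `Bin(n,θ)`). -/
noncomputable def gf (b n : ℕ) (y : ℝ) : ℝ :=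
  (n.choose (b-1) : ℝ) * y^(b-1) * (1-y)^(n+1-b) + (n.choose b : ℝ) * y^b * (1-y)^(n-b)

/-- `H θ = 2 P(Bin(n+1,θ) < b) + P(Bin(n+1,θ) = b)`. -/
noncomputable def Hf (b n : ℕ) (y : ℝ) : ℝ :=
  2 * (∑ i ∈ range b, ((n+1).choose i : ℝ) * y^i * (1-y)^(n+1-i)) +
    ((n+1).choose b : ℝ) * y^b * (1-y)^(n+1-b)

lemma hasDerivAt_term (c : ℝ) (i j : ℕ) (x : ℝ) :
    HasDerivAt (fun y : ℝ => c * y ^ i * (1 - y) ^ j)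
      (c * (i * x ^ (i-1)) * (1-x) ^ j - c * x ^ i * (j * (1-x) ^ (j-1))) x := by
  have h1 : HasDerivAt (fun y : ℝ => c * y ^ i) (c * (i * x ^ (i-1))) x :=
    (hasDerivAt_pow i x).const_mul c
  have h2 : HasDerivAt (fun y : ℝ => (1 - y) ^ j) (j * (1-x)^(j-1) * (-1)) x :=
    ((hasDerivAt_id x).const_sub 1).pow j
  have := h1.mul h2
  refine this.congr_deriv (Eq.symm ?_)
  ring

lemma nchoose_mul_self (N b : ℕ) (hb : 1 ≤ b) (hbN : b ≤ N) :
    N.choose b * b = N * ((N-1).choose (b-1)) := by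
  have h := Nat.add_one_mul_choose_eq (N-1) (b-1)
  have h1 : N - 1 + 1 = N := by omega
  have h2 : b - 1 + 1 = b := by omega
  rw [h1, h2] at h
  omega

lemma nchoose_mul_sub (N b : ℕ) (hbN : b ≤ N) :
    N.choose b * (N - b) = N * ((N-1).choose b) := by
  rcases Nat.eq_zero_or_pos N with rfl | hN
  · interval_cases b; simp
  have h := Nat.add_one_mul_choose_eq (N-1) b
  have h1 : N - 1 + 1 = N := by omega
  rw [h1] at h
  have h2 := Nat.choose_succ_right_eq N b
  omega

lemma hasDerivAt_P (N : ℕ) (b : ℕ) (hb : 1 ≤ b) (hbN : b ≤ N) (x : ℝ) :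
    HasDerivAt (fun y : ℝ => ∑ i ∈ range b, (N.choose i : ℝ) * y ^ i * (1 - y) ^ (N - i))
      (-((N:ℝ) * ((N-1).choose (b-1) : ℝ) * x ^ (b-1) * (1-x) ^ (N-b))) x := by
  induction b, hb using Nat.le_induction with
  | base =>
      have h := hasDerivAt_term (1:ℝ) 0 N x
      have h2 : HasDerivAt (fun y : ℝ => ∑ i ∈ range 1, (N.choose i : ℝ) * y ^ i * (1 - y) ^ (N - i))
          ((1:ℝ) * ((0:ℕ) * x ^ (0-1)) * (1-x) ^ N - 1 * x ^ 0 * (N * (1-x) ^ (N-1))) x := by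
        simpa using h
      convert h2 using 1
      simp
  | succ b hb ih =>
      have hbN' : b ≤ N := by omega
      have ihb := ih hbN'
      have ht := hasDerivAt_term ((N.choose b : ℝ)) b (N - b) x
      have h2 : HasDerivAt (fun y : ℝ => ∑ i ∈ range (b+1), (N.choose i : ℝ) * y ^ i * (1 - y) ^ (N - i))
          (-((N:ℝ) * ((N-1).choose (b-1) : ℝ) * x ^ (b-1) * (1-x) ^ (N-b)) +
           ((N.choose b : ℝ) * (b * x ^ (b-1)) * (1-x) ^ (N-b) -
            (N.choose b : ℝ) * x ^ b * ((N-b : ℕ) * (1-x) ^ (N-b-1)))) x := by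
        have heq : (fun y : ℝ => ∑ i ∈ range (b+1), (N.choose i : ℝ) * y ^ i * (1 - y) ^ (N - i))
            = fun y : ℝ => (∑ i ∈ range b, (N.choose i : ℝ) * y ^ i * (1 - y) ^ (N - i)) +
              (N.choose b : ℝ) * y ^ b * (1 - y) ^ (N - b) := by
          funext y; rw [Finset.sum_range_succ]
        rw [heq]; exact ihb.add ht
      convert h2 using 1
      have e1 : ((N.choose b : ℝ)) * b = (N:ℝ) * ((N-1).choose (b-1) : ℝ) := by
        exact_mod_cast congrArg (Nat.cast (R := ℝ)) (nchoose_mul_self N b hb (by omega))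
      have e2 : ((N.choose b : ℝ)) * ((N - b : ℕ) : ℝ) = (N:ℝ) * ((N-1).choose b : ℝ) := by
        exact_mod_cast congrArg (Nat.cast (R := ℝ)) (nchoose_mul_sub N b (by omega))
      have hx1 : b + 1 - 1 = b := by omega
      have hx2 : N - (b + 1) = N - b - 1 := by omega
      rw [hx1, hx2]
      linear_combination (x^b*(1-x)^(N-b-1)) * e2 - (x^(b-1)*(1-x)^(N-b)) * e1

lemma hasDerivAt_H (b n : ℕ) (hb : 1 ≤ b) (hbn : b ≤ n) (x : ℝ) :
    HasDerivAt (Hf b n) (-(((n:ℝ)+1) * gf b n x)) x := by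
  have hP := hasDerivAt_P (n+1) b hb (by omega) x
  have hT := hasDerivAt_term (((n+1).choose b : ℝ)) b (n+1-b) x
  have htot := (hP.const_mul (2:ℝ)).add hT
  have : Hf b n = fun y : ℝ =>
      2 * (∑ i ∈ range b, ((n+1).choose i : ℝ) * y^i * (1-y)^(n+1-i)) +
      ((n+1).choose b : ℝ) * y^b * (1-y)^(n+1-b) := rfl
  rw [this]
  refine htot.congr_deriv (Eq.symm ?_)
  have e1 : (((n+1).choose b : ℝ)) * b = ((n:ℝ)+1) * ((n.choose (b-1)) : ℝ) := by
    have := nchoose_mul_self (n+1) b hb (by omega)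
    simp only [Nat.add_sub_cancel] at this
    exact_mod_cast congrArg (Nat.cast (R := ℝ)) this
  have e2 : (((n+1).choose b : ℝ)) * ((n+1-b : ℕ) : ℝ) = ((n:ℝ)+1) * ((n.choose b) : ℝ) := by
    have := nchoose_mul_sub (n+1) b (by omega)
    simp only [Nat.add_sub_cancel] at this
    exact_mod_cast congrArg (Nat.cast (R := ℝ)) this
  have hx2 : n + 1 - b - 1 = n - b := by omega
  have hx3 : n + 1 - 1 = n := by omega
  simp only [gf, hx2, hx3]
  push_cast
  linear_combination (x^b*(1-x)^(n-b)) * e2 - (x^(b-1)*(1-x)^(n+1-b)) * e1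

lemma hasDerivAt_g (b n : ℕ) (hb : 1 ≤ b) (hbn : b + 1 ≤ n) (x : ℝ) :
    HasDerivAt (gf b n)
      (((b-1 : ℕ) : ℝ) * (n.choose (b-1) : ℝ) * x^(b-2) * (1-x)^(n+1-b)
        - ((n-b : ℕ) : ℝ) * (n.choose b : ℝ) * x^b * (1-x)^(n-b-1)) x := by
  have h1 := hasDerivAt_term ((n.choose (b-1) : ℝ)) (b-1) (n+1-b) x
  have h2 := hasDerivAt_term ((n.choose b : ℝ)) b (n-b) x
  have htot := h1.add h2
  have : gf b n = fun y : ℝ => (n.choose (b-1) : ℝ) * y^(b-1) * (1-y)^(n+1-b) +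
      (n.choose b : ℝ) * y^b * (1-y)^(n-b) := rfl
  rw [this]
  refine htot.congr_deriv (Eq.symm ?_)
  have e3 : ((n.choose b : ℝ)) * b = (n.choose (b-1) : ℝ) * ((n+1-b : ℕ) : ℝ) := by
    have h := Nat.choose_succ_right_eq n (b-1)
    have h1 : b - 1 + 1 = b := by omega
    have h2 : n - (b-1) = n + 1 - b := by omega
    rw [h1, h2] at h
    exact_mod_cast congrArg (Nat.cast (R := ℝ)) h
  have hx1 : b - 1 - 1 = b - 2 := by omega
  have hx2 : n + 1 - b - 1 = n - b := by omega
  rw [hx1, hx2]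
  linear_combination (x^(b-1)*(1-x)^(n-b)) * e3 * (-1)

lemma deriv_g_expr_nonpos (b n : ℕ) (hb : 1 ≤ b) (hn : 2*b ≤ n) (x : ℝ)
    (hx1 : (b:ℝ)/((n:ℝ)+1) ≤ x) (hx2 : x ≤ (b:ℝ)/(n:ℝ)) :
    ((b-1 : ℕ) : ℝ) * (n.choose (b-1) : ℝ) * x^(b-2) * (1-x)^(n+1-b)
      ≤ ((n-b : ℕ) : ℝ) * (n.choose b : ℝ) * x^b * (1-x)^(n-b-1) := by
  have hn0 : (0:ℝ) < n := by
    have : 0 < n := by omega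
    exact_mod_cast this
  have hbp : (0:ℝ) < b := by exact_mod_cast hb
  have hxpos : 0 < x := lt_of_lt_of_le (by positivity) hx1
  have hxhalf : x ≤ 1/2 := by
    refine hx2.trans ?_
    rw [div_le_iff₀ hn0]
    have : (2:ℝ)*b ≤ n := by exact_mod_cast hn
    linarith
  have h1x : 0 < 1 - x := by linarith
  rcases eq_or_lt_of_le hb with hb1 | hb2
  · -- b = 1
    rw [show b - 1 = 0 from by omega]
    simp only [Nat.cast_zero, zero_mul]
    positivity
  · -- b ≥ 2
    have hb2' : 2 ≤ b := hb2
    have h0 : (b:ℝ) * (1-x) ≤ ((n+1-b : ℕ):ℝ) * x := by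
      have hcast : ((n+1-b : ℕ):ℝ) = (n:ℝ)+1-(b:ℝ) := by
        have : (b:ℕ) ≤ n+1 := by omega
        push_cast [Nat.cast_sub this]
        ring
      rw [hcast]
      have := (div_le_iff₀ (by positivity : (0:ℝ) < (n:ℝ)+1)).1 hx1
      nlinarith
    have e3 : n.choose b * b = n.choose (b-1) * (n+1-b) := by
      have h := Nat.choose_succ_right_eq n (b-1)
      rw [show b - 1 + 1 = b by omega, show n - (b-1) = n+1-b by omega] at h
      exact h
    have Km : (b-1) * (n+1-b) ≤ b * (n-b) := by
      obtain ⟨B, rfl⟩ : ∃ B, b = B + 1 := ⟨b-1, by omega⟩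
      obtain ⟨D, rfl⟩ : ∃ D, n = (B+1) + D := ⟨n - (B+1), by omega⟩
      have h1 : B + 1 + D + 1 - (B + 1) = D + 1 := by omega
      have h2 : B + 1 + D - (B + 1) = D := by omega
      have h3 : B + 1 - 1 = B := by omega
      rw [h1, h2, h3, Nat.mul_succ, Nat.succ_mul]
      exact Nat.add_le_add_left (by omega) _
    have K : (b-1) * (n.choose (b-1)) * ((n+1-b))^2 ≤ (n-b) * (n.choose b) * b^2 := by
      calc (b-1) * (n.choose (b-1)) * ((n+1-b))^2
          = ((b-1)*(n+1-b)) * (n.choose (b-1) * (n+1-b)) := by ring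
        _ = ((b-1)*(n+1-b)) * (n.choose b * b) := by rw [e3]
        _ ≤ (b*(n-b)) * (n.choose b * b) := Nat.mul_le_mul_right _ Km
        _ = (n-b) * (n.choose b) * b^2 := by ring
    have KR : ((b-1:ℕ):ℝ) * (n.choose (b-1) : ℝ) * ((n+1-b:ℕ):ℝ)^2
        ≤ ((n-b:ℕ):ℝ) * (n.choose b : ℝ) * (b:ℝ)^2 := by exact_mod_cast K
    have s1 : (b:ℝ)^2*(1-x)^2 ≤ ((n+1-b:ℕ):ℝ)^2 * x^2 := by
      have h00 : (0:ℝ) ≤ (b:ℝ)*(1-x) := by positivity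
      have h01 := mul_self_le_mul_self h00 h0
      nlinarith [h01]
    have G : ((b-1:ℕ):ℝ) * (n.choose (b-1) : ℝ) * (1-x)^2 ≤ ((n-b:ℕ):ℝ) * (n.choose b : ℝ) * x^2 := by
      have hbsq : (0:ℝ) < (b:ℝ)^2 := by positivity
      rw [← mul_le_mul_iff_right₀ hbsq]
      calc (b:ℝ)^2 * (((b-1:ℕ):ℝ) * (n.choose (b-1) : ℝ) * (1-x)^2)
          = ((b-1:ℕ):ℝ) * (n.choose (b-1) : ℝ) * ((b:ℝ)^2*(1-x)^2) := by ring
        _ ≤ ((b-1:ℕ):ℝ) * (n.choose (b-1) : ℝ) * (((n+1-b:ℕ):ℝ)^2 * x^2) := by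
            apply mul_le_mul_of_nonneg_left s1 (by positivity)
        _ = (((b-1:ℕ):ℝ) * (n.choose (b-1) : ℝ) * ((n+1-b:ℕ):ℝ)^2) * x^2 := by ring
        _ ≤ (((n-b:ℕ):ℝ) * (n.choose b : ℝ) * (b:ℝ)^2) * x^2 := by
            apply mul_le_mul_of_nonneg_right KR (by positivity)
        _ = (b:ℝ)^2 * (((n-b:ℕ):ℝ) * (n.choose b : ℝ) * x^2) := by ring
    have hp1 : x^b = x^2 * x^(b-2) := by rw [← pow_add]; congr 1; omega
    have hp2 : (1-x)^(n+1-b) = (1-x)^2 * (1-x)^(n-b-1) := by rw [← pow_add]; congr 1; omega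
    have M : (0:ℝ) ≤ x^(b-2)*(1-x)^(n-b-1) := by positivity
    calc ((b-1 : ℕ) : ℝ) * (n.choose (b-1) : ℝ) * x^(b-2) * (1-x)^(n+1-b)
        = (((b-1:ℕ):ℝ) * (n.choose (b-1) : ℝ) * (1-x)^2) * (x^(b-2)*(1-x)^(n-b-1)) := by
          rw [hp2]; ring
      _ ≤ (((n-b:ℕ):ℝ) * (n.choose b : ℝ) * x^2) * (x^(b-2)*(1-x)^(n-b-1)) :=
          mul_le_mul_of_nonneg_right G M
      _ = ((n-b : ℕ) : ℝ) * (n.choose b : ℝ) * x^b * (1-x)^(n-b-1) := by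
          rw [hp1]; ring

lemma H_le (b n : ℕ) (hb : 0 < b) (hn : 2*b ≤ n) :
    Hf b n ((b:ℝ)/(n:ℝ)) + ((b:ℝ)/(n:ℝ)) * gf b n ((b:ℝ)/(n:ℝ))
      ≤ Hf b n ((b:ℝ)/((n:ℝ)+1)) := by
  have hn0 : (0:ℝ) < n := by
    have : 0 < n := by omega
    exact_mod_cast this
  set p' : ℝ := (b:ℝ)/((n:ℝ)+1) with hp'def
  set p : ℝ := (b:ℝ)/(n:ℝ) with hpdef
  have hp'p : p' ≤ p := by
    apply div_le_div_of_nonneg_left (by positivity) hn0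
    linarith
  have gdiff : ∀ y : ℝ, HasDerivAt (gf b n)
      (((b-1 : ℕ) : ℝ) * (n.choose (b-1) : ℝ) * y^(b-2) * (1-y)^(n+1-b)
        - ((n-b : ℕ) : ℝ) * (n.choose b : ℝ) * y^b * (1-y)^(n-b-1)) y :=
    fun y => hasDerivAt_g b n hb (by omega) y
  have gdiffable : Differentiable ℝ (gf b n) := fun y => (gdiff y).differentiableAt
  have ganti : AntitoneOn (gf b n) (Set.Icc p' p) := by
    apply antitoneOn_of_deriv_nonpos (convex_Icc _ _) gdiffable.continuous.continuousOn
      (fun y _ => (gdiffable y).differentiableWithinAt)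
    intro y hy
    rw [interior_Icc] at hy
    rw [(gdiff y).deriv]
    exact sub_nonpos.2 (deriv_g_expr_nonpos b n hb hn y hy.1.le hy.2.le)
  set c : ℝ := ((n:ℝ)+1) * gf b n p with hcdef
  have phidiff : ∀ y : ℝ, HasDerivAt (fun y => Hf b n y + c * y)
      (-(((n:ℝ)+1) * gf b n y) + c) y := by
    intro y
    exact (hasDerivAt_H b n hb (by omega) y).add
      (((hasDerivAt_id y).const_mul c).congr_deriv (by ring))
  have phidiffable : Differentiable ℝ (fun y => Hf b n y + c * y) :=
    fun y => (phidiff y).differentiableAt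
  have phianti : AntitoneOn (fun y => Hf b n y + c * y) (Set.Icc p' p) := by
    apply antitoneOn_of_deriv_nonpos (convex_Icc _ _) phidiffable.continuous.continuousOn
      (fun y _ => (phidiffable y).differentiableWithinAt)
    intro y hy
    rw [interior_Icc] at hy
    rw [(phidiff y).deriv]
    have hmem : y ∈ Set.Icc p' p := ⟨hy.1.le, hy.2.le⟩
    have hpmem : p ∈ Set.Icc p' p := ⟨hp'p, le_refl p⟩
    have := ganti hmem hpmem hy.2.le
    rw [hcdef]
    nlinarith [this]
  have hkey := phianti (Set.left_mem_Icc.2 hp'p) (Set.right_mem_Icc.2 hp'p) hp'p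
  have idf : ((n:ℝ)+1) * (p - p') = p := by
    rw [hpdef, hp'def]
    field_simp
    ring
  have idf2 : c * p - c * p' = p * gf b n p := by
    rw [hcdef]
    linear_combination (gf b n p) * idf
  simp only [] at hkey
  linarith [hkey, idf2]

lemma P_succ (b n : ℕ) (hb : 1 ≤ b) (hbn : b ≤ n) (θ : ℝ) :
    ∑ i ∈ range b, ((n+1).choose i : ℝ)*θ^i*(1-θ)^(n+1-i)
      = (∑ i ∈ range b, (n.choose i : ℝ)*θ^i*(1-θ)^(n-i))
        - θ * ((n.choose (b-1):ℝ)*θ^(b-1)*(1-θ)^(n+1-b)) := by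
  induction b, hb using Nat.le_induction with
  | base =>
      simp only [Finset.sum_range_one, Nat.choose_zero_right, Nat.cast_one, pow_zero,
        Nat.sub_zero, one_mul, Nat.add_sub_cancel]
      rw [pow_succ]
      simp
      ring
  | succ b hb ih =>
      have ihb := ih (by omega)
      rw [Finset.sum_range_succ, Finset.sum_range_succ, ihb]
      have epascal : (((n+1).choose b : ℝ)) = (n.choose (b-1) : ℝ) + (n.choose b : ℝ) := by
        have h := Nat.choose_succ_succ n (b-1)
        simp only [Nat.succ_eq_add_one] at h
        rw [show b - 1 + 1 = b by omega] at h
        exact_mod_cast congrArg (Nat.cast (R:=ℝ)) h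
      have hp1 : θ^b = θ^(b-1)*θ := by rw [← pow_succ]; congr 1; omega
      have hp2 : (1-θ)^(n+1-b) = (1-θ)^(n-b)*(1-θ) := by rw [← pow_succ]; congr 1; omega
      rw [show b+1-1 = b by omega, show n+1-(b+1) = n-b by omega, epascal, hp1, hp2]
      ring

lemma H_eq (b n : ℕ) (hb : 1 ≤ b) (hbn : b+1 ≤ n) (θ : ℝ) :
    Hf b n θ = (2 * (∑ i ∈ range b, (n.choose i:ℝ)*θ^i*(1-θ)^(n-i))
        + (n.choose b:ℝ)*θ^b*(1-θ)^(n-b)) - θ * gf b n θ := by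
  unfold Hf gf
  rw [P_succ b n hb (by omega) θ]
  have epascal : (((n+1).choose b : ℝ)) = (n.choose (b-1) : ℝ) + (n.choose b : ℝ) := by
    have h := Nat.choose_succ_succ n (b-1)
    simp only [Nat.succ_eq_add_one] at h
    rw [show b - 1 + 1 = b by omega] at h
    exact_mod_cast congrArg (Nat.cast (R:=ℝ)) h
  have hp1 : θ^b = θ^(b-1)*θ := by rw [← pow_succ]; congr 1; omega
  have hp2 : (1-θ)^(n+1-b) = (1-θ)^(n-b)*(1-θ) := by rw [← pow_succ]; congr 1; omega
  rw [epascal, hp1, hp2]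
  ring

lemma W_mono (b n : ℕ) (hb : 0 < b) (hn : 2*b ≤ n) :
    2 * binP b n + QQ b n ≤ 2 * binP b (n+1) + QQ b (n+1) := by
  have hc : ((n+1:ℕ):ℝ) = (n:ℝ)+1 := by push_cast; ring
  have h1 : 2 * binP b (n+1) + QQ b (n+1) = Hf b n ((b:ℝ)/((n:ℝ)+1)) := by
    unfold binP QQ Hf
    rw [hc]
  have h2 : Hf b n ((b:ℝ)/(n:ℝ)) = (2 * binP b n + QQ b n)
      - ((b:ℝ)/(n:ℝ)) * gf b n ((b:ℝ)/(n:ℝ)) := by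
    rw [H_eq b n hb (by omega)]
    unfold binP QQ
    ring
  have h3 := H_le b n hb hn
  rw [h1, h2] at *
  linarith [h3]

lemma choose_div_pow_mono (k m n : ℕ) (hm : 1 ≤ m) (hmn : m ≤ n) :
    (m.choose k : ℝ)/(m:ℝ)^k ≤ (n.choose k : ℝ)/(n:ℝ)^k := by
  have hm0 : (0:ℝ) < m := by exact_mod_cast hm
  have hn0 : (0:ℝ) < n := by
    have : (1:ℕ) ≤ n := le_trans hm hmn
    exact_mod_cast this
  induction k with
  | zero => simp
  | succ k ih =>
      have em : ((m.choose (k+1)):ℝ) * ((k:ℝ)+1) = (m.choose k : ℝ) * ((m - k : ℕ):ℝ) := by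
        exact_mod_cast congrArg (Nat.cast (R:=ℝ)) (Nat.choose_succ_right_eq m k)
      have en : ((n.choose (k+1)):ℝ) * ((k:ℝ)+1) = (n.choose k : ℝ) * ((n - k : ℕ):ℝ) := by
        exact_mod_cast congrArg (Nat.cast (R:=ℝ)) (Nat.choose_succ_right_eq n k)
      have hfac : ((m - k : ℕ):ℝ)/(m:ℝ) ≤ ((n - k : ℕ):ℝ)/(n:ℝ) := by
        rw [div_le_div_iff₀ hm0 hn0]
        have : (m - k) * n ≤ (n - k) * m := by
          rcases le_or_gt k m with h | h
          · have e1 : (m-k)*n = m*n - k*n := by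
              rw [Nat.sub_mul]
            have e2 : (n-k)*m = n*m - k*m := by
              rw [Nat.sub_mul]
            rw [e1, e2]
            have h4 : k*m ≤ k*n := Nat.mul_le_mul_left k hmn
            have h5 : m*n = n*m := Nat.mul_comm m n
            have h6 : k*n ≤ m*n := Nat.mul_le_mul_right n h
            omega
          · have : m - k = 0 := by omega
            simp [this]
        exact_mod_cast this
      have key : (m.choose (k+1) : ℝ)/(m:ℝ)^(k+1)
          = ((m.choose k : ℝ)/(m:ℝ)^k) * (((m - k : ℕ):ℝ)/(m:ℝ)) / ((k:ℝ)+1) := by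
        rw [pow_succ]
        field_simp
        linear_combination em
      have key2 : (n.choose (k+1) : ℝ)/(n:ℝ)^(k+1)
          = ((n.choose k : ℝ)/(n:ℝ)^k) * (((n - k : ℕ):ℝ)/(n:ℝ)) / ((k:ℝ)+1) := by
        rw [pow_succ]
        field_simp
        linear_combination en
      rw [key, key2]
      apply (div_le_div_iff_of_pos_right (by positivity : (0:ℝ) < (k:ℝ)+1)).2
      exact mul_le_mul ih hfac (by positivity) (by positivity)

lemma binom_expand (N : ℕ) (hN : 1 ≤ N) :
    ((N:ℝ)+1)^N / (N:ℝ)^N = ∑ k ∈ range (N+1), (N.choose k : ℝ)/(N:ℝ)^k := by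
  have hN0 : (0:ℝ) < N := by exact_mod_cast hN
  have hl : (1/(N:ℝ) + 1) = ((N:ℝ)+1)/(N:ℝ) := by field_simp; ring
  calc ((N:ℝ)+1)^N/(N:ℝ)^N = ((((N:ℝ)+1)/(N:ℝ)))^N := (div_pow _ _ _).symm
    _ = (1/(N:ℝ) + 1)^N := by rw [hl]
    _ = ∑ k ∈ range (N+1), (1/(N:ℝ))^k * 1^(N-k) * (N.choose k : ℝ) := add_pow _ _ _
    _ = ∑ k ∈ range (N+1), (N.choose k:ℝ)/(N:ℝ)^k := by
        refine Finset.sum_congr rfl fun k _ => ?_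
        rw [one_pow, div_pow, one_pow]
        ring

lemma pow_ratio_mono (m n : ℕ) (hm : 1 ≤ m) (hmn : m ≤ n) :
    ((m:ℝ)+1)^m * (n:ℝ)^n ≤ (m:ℝ)^m * ((n:ℝ)+1)^n := by
  have hm0 : (0:ℝ) < m := by exact_mod_cast hm
  have hn1 : 1 ≤ n := le_trans hm hmn
  have hn0 : (0:ℝ) < n := by exact_mod_cast hn1
  have h : (∑ k ∈ range (m+1), (m.choose k : ℝ)/(m:ℝ)^k)
      ≤ ∑ k ∈ range (n+1), (n.choose k : ℝ)/(n:ℝ)^k := by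
    calc ∑ k ∈ range (m+1), (m.choose k : ℝ)/(m:ℝ)^k
        ≤ ∑ k ∈ range (m+1), (n.choose k : ℝ)/(n:ℝ)^k := by
          refine Finset.sum_le_sum fun k _ => choose_div_pow_mono k m n hm hmn
      _ ≤ ∑ k ∈ range (n+1), (n.choose k : ℝ)/(n:ℝ)^k := by
          refine Finset.sum_le_sum_of_subset_of_nonneg
            (Finset.range_subset_range.2 (by omega)) fun k _ _ => by positivity
  rw [← binom_expand m hm, ← binom_expand n hn1] at h
  rw [div_le_div_iff₀ (by positivity) (by positivity)] at h
  exact h.trans_eq (mul_comm _ _)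

lemma QQ_eq (b N : ℕ) (hb : 0 < b) (hbN : b < N) :
    QQ b N = (N.choose b : ℝ) * ((b:ℝ)^b * ((N-b:ℕ):ℝ)^(N-b)) / (N:ℝ)^N := by
  unfold QQ
  have hN0 : (0:ℝ) < N := by
    have : 0 < N := by omega
    exact_mod_cast this
  have hc : (1 - (b:ℝ)/N) = ((N-b:ℕ):ℝ)/(N:ℝ) := by
    rw [Nat.cast_sub hbN.le]
    field_simp
  have hsplit : (N:ℝ)^b * (N:ℝ)^(N-b) = (N:ℝ)^N := by
    rw [← pow_add]; congr 1; omega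
  rw [hc, div_pow, div_pow, ← hsplit]
  field_simp

lemma Q_pos (b n : ℕ) (hb : 0 < b) (hbn : b < n) : 0 < QQ b n := by
  unfold QQ
  have hn0 : (0:ℝ) < n := by
    have : 0 < n := by omega
    exact_mod_cast this
  have h1 : (0:ℝ) < (b:ℝ)/n := by
    have : (0:ℝ) < b := by exact_mod_cast hb
    positivity
  have h2 : (0:ℝ) < 1 - (b:ℝ)/n := by
    rw [sub_pos, div_lt_one hn0]
    exact_mod_cast hbn
  have h3 : (0:ℝ) < (n.choose b : ℝ) := by
    exact_mod_cast Nat.choose_pos hbn.le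
  positivity

lemma Q_mono (b n : ℕ) (hb : 0 < b) (hn : 2*b ≤ n) : QQ b (n+1) ≤ QQ b n := by
  rw [QQ_eq b n hb (by omega), QQ_eq b (n+1) hb (by omega)]
  have hn0 : (0:ℝ) < n := by
    have : 0 < n := by omega
    exact_mod_cast this
  have hn10 : (0:ℝ) < ((n+1:ℕ):ℝ) := by positivity
  rw [div_le_div_iff₀ (by positivity) (by positivity)]
  have hA : ((n+1-b:ℕ):ℝ) = ((n-b:ℕ):ℝ)+1 := by
    exact_mod_cast congrArg (Nat.cast (R:=ℝ)) (by omega : n+1-b = (n-b)+1)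
  have hApow : ((n+1-b:ℕ):ℝ)^(n+1-b) = ((n+1-b:ℕ):ℝ)^(n-b) * ((n+1-b:ℕ):ℝ) := by
    rw [← pow_succ]; congr 1; omega
  have hNpow : ((n+1:ℕ):ℝ)^(n+1) = ((n+1:ℕ):ℝ)^n * ((n+1:ℕ):ℝ) := by
    rw [← pow_succ]
  have echoose : (((n+1).choose b : ℕ):ℝ) * ((n+1-b:ℕ):ℝ) = ((n+1:ℕ):ℝ) * (n.choose b : ℝ) := by
    have h := nchoose_mul_sub (n+1) b (by omega)
    simp only [Nat.add_sub_cancel] at h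
    exact_mod_cast congrArg (Nat.cast (R:=ℝ)) h
  have core := pow_ratio_mono (n-b) n (by omega) (by omega)
  have hcast1 : ((n+1:ℕ):ℝ) = (n:ℝ)+1 := by push_cast; ring
  have cpos : (0:ℝ) ≤ ((n+1:ℕ):ℝ) * (n.choose b : ℝ) * (b:ℝ)^b := by positivity
  calc ((n+1).choose b : ℝ) * ((b:ℝ)^b * ((n+1-b:ℕ):ℝ)^(n+1-b)) * (n:ℝ)^n
      = (((n+1).choose b : ℝ) * ((n+1-b:ℕ):ℝ)) * (b:ℝ)^b
          * ((((n-b:ℕ):ℝ)+1)^(n-b) * (n:ℝ)^n) := by rw [hApow, hA]; ring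
    _ = (((n+1:ℕ):ℝ) * (n.choose b : ℝ) * (b:ℝ)^b)
          * ((((n-b:ℕ):ℝ)+1)^(n-b) * (n:ℝ)^n) := by rw [echoose]
    _ ≤ (((n+1:ℕ):ℝ) * (n.choose b : ℝ) * (b:ℝ)^b)
          * (((n-b:ℕ):ℝ)^(n-b) * ((n:ℝ)+1)^n) := mul_le_mul_of_nonneg_left core cpos
    _ = (n.choose b : ℝ) * ((b:ℝ)^b * ((n-b:ℕ):ℝ)^(n-b)) * ((n+1:ℕ):ℝ)^(n+1) := by
          rw [hNpow, hcast1]; ring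

lemma nat_sym (b : ℕ) : 2 * (∑ i ∈ range b, (2*b).choose i) + (2*b).choose b = 2^(2*b) := by
  have h0 := Nat.sum_range_choose (2*b)
  rw [show 2*b+1 = b + (b+1) by omega, Finset.sum_range_add, Finset.sum_range_succ'] at h0
  have hT : ∑ i ∈ range b, (2*b).choose (b+(i+1)) = ∑ i ∈ range b, (2*b).choose i := by
    have h1 : ∀ i ∈ range b, (2*b).choose (b+(i+1)) = (2*b).choose (b-1-i) := by
      intro i hi
      rw [Finset.mem_range] at hi
      rw [← Nat.choose_symm (by omega : b+(i+1) ≤ 2*b)]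
      congr 1
      omega
    rw [Finset.sum_congr rfl h1]
    exact Finset.sum_range_reflect (fun j => (2*b).choose j) b
  rw [hT, Nat.add_zero] at h0
  omega

lemma binZ_base (b : ℕ) (hb : 0 < b) : binZ b (2*b) = 1/2 := by
  have hb0 : (0:ℝ) < b := by exact_mod_cast hb
  have hhalf : ((b:ℝ))/((2*b:ℕ):ℝ) = 1/2 := by
    push_cast
    field_simp
  have h1mh : (1:ℝ) - 1/2 = 1/2 := by norm_num
  unfold binZ binP
  rw [hhalf, h1mh]
  have hterm : ∀ i ∈ range b, ((2*b).choose i : ℝ) * (1/2:ℝ)^i * (1/2:ℝ)^(2*b-i)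
      = ((2*b).choose i : ℝ) * (1/2:ℝ)^(2*b) := by
    intro i hi
    rw [Finset.mem_range] at hi
    rw [mul_assoc, ← pow_add, show i + (2*b-i) = 2*b by omega]
  rw [Finset.sum_congr rfl hterm]
  rw [← Finset.sum_mul]
  have hq : ((2*b).choose b : ℝ) * (1/2:ℝ)^b * (1/2:ℝ)^(2*b-b)
      = ((2*b).choose b : ℝ) * (1/2:ℝ)^(2*b) := by
    rw [mul_assoc, ← pow_add, show b + (2*b-b) = 2*b by omega]
  rw [hq]
  have hC : (0:ℝ) < ((2*b).choose b : ℝ) := by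
    exact_mod_cast Nat.choose_pos (by omega : b ≤ 2*b)
  have ht : (0:ℝ) < (1/2:ℝ)^(2*b) := by positivity
  rw [div_eq_iff (by positivity)]
  have hsym : 2 * ((∑ i ∈ range b, (2*b).choose i : ℕ):ℝ) + ((2*b).choose b : ℝ) = 2^(2*b) := by
    exact_mod_cast congrArg (Nat.cast (R:=ℝ)) (nat_sym b)
  have h2t : (2:ℝ)^(2*b) * (1/2:ℝ)^(2*b) = 1 := by
    rw [← mul_pow]
    norm_num
  push_cast at hsym
  nlinarith [hsym, h2t, ht]

lemma final_arith (x x' q q' : ℝ) (hq : 0 < q) (hq' : 0 < q') (hx : x ≤ q/2)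
    (hQm : q' ≤ q) (hW : x' ≤ x - (q - q')/2) : x' * q ≤ x * q' := by
  nlinarith [mul_le_mul_of_nonneg_right hW hq.le,
    mul_nonneg (sub_nonneg.2 hQm) (by linarith : (0:ℝ) ≤ q/2 - x)]

lemma half_bound (b n : ℕ) (hb : 0 < b) (hn : 2*b ≤ n) :
    1/2 - binP b n ≤ QQ b n / 2 := by
  induction n, hn using Nat.le_induction with
  | base =>
      have h := binZ_base b hb
      have hq := Q_pos b (2*b) hb (by omega)
      have hdef : binZ b (2*b) = (1/2 - binP b (2*b)) / QQ b (2*b) := rfl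
      rw [hdef, div_eq_iff (ne_of_gt hq)] at h
      linarith
  | succ n hn ih =>
      have hW := W_mono b n hb hn
      linarith

end ZAux

theorem z_antitone_in_n (b n : ℕ) (hb : 0 < b) (hn : 2 * b ≤ n) :
    binZ b (n + 1) ≤ binZ b n := by
  have hq : 0 < ZAux.QQ b n := ZAux.Q_pos b n hb (by omega)
  have hq' : 0 < ZAux.QQ b (n+1) := ZAux.Q_pos b (n+1) hb (by omega)
  have hW := ZAux.W_mono b n hb hn
  have hQm := ZAux.Q_mono b n hb hn
  have hhalf := ZAux.half_bound b n hb hn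
  have hdef1 : binZ b n = (1/2 - binP b n) / ZAux.QQ b n := rfl
  have hdef2 : binZ b (n+1) = (1/2 - binP b (n+1)) / ZAux.QQ b (n+1) := rfl
  rw [hdef1, hdef2, div_le_div_iff₀ hq' hq]
  exact ZAux.final_arith (1/2 - binP b n) (1/2 - binP b (n+1)) (ZAux.QQ b n) (ZAux.QQ b (n+1))
    hq hq' hhalf hQm (by linarith)
end

section
/- For all positive integers b and n with b + 1 ≤ n ≤ 3b + 1, one has p_{b+1,n} < p_{b,n}. -/
open Finset

lemma log_lb (w : ℝ) (h0 : 0 ≤ w) (h1 : w < 1) :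
    2*w + 2/3*w^3 ≤ Real.log (1+w) - Real.log (1-w) := by
  have hderiv : ∀ t ∈ Set.uIcc (0:ℝ) w,
      HasDerivAt (fun t => Real.log (1+t) - Real.log (1-t)) (2/(1-t^2)) t := by
    intro t ht
    rw [Set.uIcc_of_le h0] at ht
    have ht0 : 0 ≤ t := ht.1
    have ht1 : t < 1 := lt_of_le_of_lt ht.2 h1
    have h1t : (0:ℝ) < 1 - t := by linarith
    have h1t' : (0:ℝ) < 1 + t := by linarith
    have d1 : HasDerivAt (fun t : ℝ => Real.log (1+t)) (1/(1+t)) t := by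
      have : HasDerivAt (fun t : ℝ => 1+t) 1 t := (hasDerivAt_id t).const_add 1
      simpa using this.log h1t'.ne'
    have d2 : HasDerivAt (fun t : ℝ => Real.log (1-t)) (-(1/(1-t))) t := by
      have : HasDerivAt (fun t : ℝ => 1-t) (-1) t := (hasDerivAt_id t).const_sub 1
      have := this.log h1t.ne'
      convert this using 1
      field_simp
    have := d1.sub d2
    convert this using 1
    · rfl
    · rfl
    · rfl
    have e1 : 1 - t^2 = (1+t)*(1-t) := by ring
    rw [e1]
    field_simp
    ring
  have hint : IntervalIntegrable (fun t : ℝ => 2/(1-t^2)) MeasureTheory.volume 0 w := by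
    apply ContinuousOn.intervalIntegrable
    apply ContinuousOn.div continuousOn_const (by fun_prop)
    intro t ht
    rw [Set.uIcc_of_le h0] at ht
    have ht1 : t < 1 := lt_of_le_of_lt ht.2 h1
    have : t^2 < 1 := by nlinarith [ht.1]
    linarith
  have hFTC := intervalIntegral.integral_eq_sub_of_hasDerivAt hderiv hint
  simp only [Real.log_one, add_zero, sub_zero] at hFTC
  have hmono : ∫ t in (0:ℝ)..w, (2 + 2*t^2) ≤ ∫ t in (0:ℝ)..w, 2/(1-t^2) := by
    apply intervalIntegral.integral_mono_on h0
      (by apply Continuous.intervalIntegrable; fun_prop) hint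
    intro t ht
    have ht1 : t < 1 := lt_of_le_of_lt ht.2 h1
    have h2 : 0 < 1 - t^2 := by nlinarith [ht.1]
    rw [le_div_iff₀ h2]
    nlinarith [sq_nonneg (t^2)]
  have hval : ∫ t in (0:ℝ)..w, (2 + 2*t^2) = 2*w + 2/3*w^3 := by
    have h1 : IntervalIntegrable (fun _:ℝ => (2:ℝ)) MeasureTheory.volume 0 w :=
      (continuous_const).intervalIntegrable 0 w
    have h2 : IntervalIntegrable (fun t:ℝ => 2*t^2) MeasureTheory.volume 0 w :=
      (by fun_prop : Continuous fun t:ℝ => 2*t^2).intervalIntegrable 0 w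
    rw [intervalIntegral.integral_add h1 h2, intervalIntegral.integral_const,
      intervalIntegral.integral_const_mul, integral_pow]
    simp; ring
  rw [hFTC] at hmono
  rw [hval] at hmono
  exact hmono

lemma log_succ_div (j : ℕ) (hj : 1 ≤ j) :
    2/(2*(j:ℝ)+1) + 2/3/(2*(j:ℝ)+1)^3 ≤ Real.log (((j:ℝ)+1)/j) := by
  have hj' : (1:ℝ) ≤ (j:ℝ) := by exact_mod_cast hj
  have hD : (0:ℝ) < 2*(j:ℝ)+1 := by linarith
  have hw0 : (0:ℝ) ≤ 1/(2*(j:ℝ)+1) := by positivity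
  have hw1 : 1/(2*(j:ℝ)+1) < 1 := by rw [div_lt_one hD]; linarith
  have hkey := log_lb _ hw0 hw1
  have e1 : 1 + 1/(2*(j:ℝ)+1) = (2*(j:ℝ)+2)/(2*(j:ℝ)+1) := by field_simp; ring
  have e2 : 1 - 1/(2*(j:ℝ)+1) = (2*(j:ℝ))/(2*(j:ℝ)+1) := by field_simp; ring
  rw [e1, e2, Real.log_div (by positivity) (by positivity),
    Real.log_div (by positivity) (by positivity)] at hkey
  have e3 : Real.log (2*(j:ℝ)+2) - Real.log (2*(j:ℝ)+1) - (Real.log (2*(j:ℝ)) - Real.log (2*(j:ℝ)+1))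
      = Real.log (((j:ℝ)+1)/(j:ℝ)) := by
    rw [Real.log_div (by positivity) (by positivity),
      show 2*(j:ℝ)+2 = 2*((j:ℝ)+1) by ring, Real.log_mul (by norm_num) (by positivity),
      Real.log_mul (by norm_num) (by positivity)]
    ring
  rw [e3, div_pow, one_pow] at hkey
  calc 2/(2*(j:ℝ)+1) + 2/3/(2*(j:ℝ)+1)^3
      = 2*(1/(2*(j:ℝ)+1)) + 2/3*(1/(2*(j:ℝ)+1)^3) := by ring
    _ ≤ _ := hkey

lemma poly_ineq (A C : ℝ) (hA : 3 ≤ A) (hC : 3 ≤ C) (hCA : C ≤ 2*A - 1) :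
    0 < 4*A^3*C^2 - 2*A^2*C^3 - 2*A^3*C + A^3 - C^3 := by
  nlinarith [mul_nonneg (mul_nonneg (sub_nonneg.2 hC) (sub_nonneg.2 hCA)) (sq_nonneg A),
    mul_pos (by linarith : (0:ℝ) < A) (by linarith : (0:ℝ) < C),
    sq_nonneg (C - 3), sq_nonneg (2*A - 1 - C),
    mul_pos (mul_pos (by linarith : (0:ℝ) < A) (by linarith : (0:ℝ) < A))
      (by linarith : (0:ℝ) < C)]

lemma GH_pos (b k : ℕ) (hb : 1 ≤ b) (hk : 1 ≤ k) (hkb : k ≤ 2*b) :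
    0 < (b:ℝ)*((b:ℝ)+1) * Real.log (((b:ℝ)+1)/b) - b + (k:ℝ)^2 * Real.log (((k:ℝ)+1)/k) - k := by
  have hB : (1:ℝ) ≤ (b:ℝ) := by exact_mod_cast hb
  have hK : (1:ℝ) ≤ (k:ℝ) := by exact_mod_cast hk
  have hKB : (k:ℝ) ≤ 2*(b:ℝ) := by exact_mod_cast hkb
  set B := (b:ℝ); set K := (k:ℝ)
  have hLb := log_succ_div b hb
  have hLk := log_succ_div k hk
  have hpoly := poly_ineq (2*B+1) (2*K+1) (by linarith) (by linarith) (by linarith)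
  have hid : B*(B+1)*(2/(2*B+1)+2/3/(2*B+1)^3) - B + K^2*(2/(2*K+1)+2/3/(2*K+1)^3) - K
      = (4*(2*B+1)^3*(2*K+1)^2 - 2*(2*B+1)^2*(2*K+1)^3 - 2*(2*B+1)^3*(2*K+1) + (2*B+1)^3 - (2*K+1)^3)
        /(6*(2*B+1)^3*(2*K+1)^3) := by
    field_simp
    ring
  have h1 : B*(B+1)*(2/(2*B+1)+2/3/(2*B+1)^3) ≤ B*(B+1)*Real.log ((B+1)/B) :=
    mul_le_mul_of_nonneg_left hLb (by nlinarith)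
  have h2 : K^2*(2/(2*K+1)+2/3/(2*K+1)^3) ≤ K^2*Real.log ((K+1)/K) :=
    mul_le_mul_of_nonneg_left hLk (sq_nonneg K)
  have hq : 0 < B*(B+1)*(2/(2*B+1)+2/3/(2*B+1)^3) - B + K^2*(2/(2*K+1)+2/3/(2*K+1)^3) - K := by
    rw [hid]; positivity
  linarith

lemma phi_deriv (n b : ℕ) (x : ℝ) :
    HasDerivAt (fun x : ℝ => ∑ i ∈ Finset.range (b+1), (n.choose i : ℝ) * x^i * (1-x)^(n-i))
      (-(((n-b) * n.choose b : ℕ) : ℝ) * (x^b * (1-x)^(n-b-1))) x := by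
  set g : ℕ → ℝ := fun j => ((j * n.choose j : ℕ) : ℝ) * (x^(j-1) * (1-x)^(n-j)) with hg
  have hterm : ∀ i ∈ Finset.range (b+1),
      HasDerivAt (fun x : ℝ => (n.choose i : ℝ) * x^i * (1-x)^(n-i)) (g i - g (i+1)) x := by
    intro i hi
    have d1 : HasDerivAt (fun x : ℝ => x^i) ((i:ℝ) * x^(i-1)) x := hasDerivAt_pow i x
    have d2 : HasDerivAt (fun x : ℝ => (1-x)^(n-i)) (((n-i:ℕ):ℝ) * (1-x)^(n-i-1) * (-1)) x :=
      ((hasDerivAt_id x).const_sub 1).pow (n-i)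
    have := ((d1.const_mul ((n.choose i : ℝ))).mul d2)
    convert this using 1
    · rfl
    · rfl
    · rfl
    have hch : ((i+1) * n.choose (i+1) : ℕ) = ((n-i) * n.choose i : ℕ) := by
      rw [mul_comm, mul_comm (n-i), Nat.choose_succ_right_eq]
    simp only [hg, hch]
    have : n - (i+1) = n - i - 1 := rfl
    rw [this]
    push_cast
    ring
  have hsum := HasDerivAt.sum hterm
  have htel : ∑ i ∈ Finset.range (b+1), (g i - g (i+1)) = g 0 - g (b+1) :=
    Finset.sum_range_sub' g (b+1)
  rw [htel] at hsum
  have hg0 : g 0 = 0 := by simp [hg]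
  have hgb : g (b+1) = (((n-b) * n.choose b : ℕ) : ℝ) * (x^b * (1-x)^(n-b-1)) := by
    have hch : ((b+1) * n.choose (b+1) : ℕ) = ((n-b) * n.choose b : ℕ) := by
      rw [mul_comm, mul_comm (n-b), Nat.choose_succ_right_eq]
    simp only [hg, hch]
    have h1 : b + 1 - 1 = b := rfl
    have h2 : n - (b+1) = n - b - 1 := rfl
    rw [h1, h2]
  rw [hg0, hgb, zero_sub] at hsum
  convert hsum using 1
  · rfl
  · rfl
  · ext y; simp
  ring

set_option maxHeartbeats 2000000 in
theorem p_decreasing_in_b (b n : ℕ) (hb : 0 < b) (hn1 : b + 1 ≤ n) (hn2 : n ≤ 3 * b + 1) :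
    binP (b + 1) n < binP b n := by
  rcases eq_or_lt_of_le hn1 with hEq | hLt
  · -- n = b + 1 : LHS = 0, RHS > 0
    subst hEq
    have h1 : binP (b+1) (b+1) = 0 := by
      unfold binP
      apply Finset.sum_eq_zero
      intro i hi
      rw [Finset.mem_range] at hi
      have hx : ((b+1:ℕ):ℝ)/((b+1:ℕ):ℝ) = 1 := div_self (by positivity)
      rw [hx, sub_self, zero_pow (by omega : b+1-i ≠ 0)]
      ring
    have h2 : 0 < binP b (b+1) := by
      unfold binP
      apply Finset.sum_pos
      · intro i hi
        rw [Finset.mem_range] at hi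
        have hc : (0:ℝ) < ((b+1).choose i : ℝ) := by
          exact_mod_cast Nat.choose_pos (by omega)
        have hp : (0:ℝ) < ((b:ℝ)/((b+1:ℕ):ℝ))^i := by positivity
        have hx : (0:ℝ) < 1 - (b:ℝ)/((b+1:ℕ):ℝ) := by
          rw [sub_pos, div_lt_one (by positivity)]
          push_cast; linarith
        exact mul_pos (mul_pos hc hp) (pow_pos hx _)
      · exact ⟨0, Finset.mem_range.2 hb⟩
    linarith
  · -- b + 2 ≤ n
    have hk1 : 1 ≤ n - b - 1 := by omega
    have hkb : n - b - 1 ≤ 2*b := by omega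
    have hnb : n - b = (n - b - 1) + 1 := by omega
    have hN : (0:ℝ) < (n:ℝ) := by exact_mod_cast (by omega : 0 < n)
    have hBr : (1:ℝ) ≤ (b:ℝ) := by exact_mod_cast hb
    have hKr0 : (1:ℝ) ≤ ((n-b-1:ℕ):ℝ) := by exact_mod_cast hk1
    have hNe : (n:ℝ) = (b:ℝ) + 1 + ((n-b-1:ℕ):ℝ) := by
      rw [show n-b-1 = n-(b+1) from rfl, Nat.cast_sub hn1]
      push_cast; ring
    unfold binP
    push_cast
    set N := (n:ℝ) with hNdef
    set p : ℝ := (b:ℝ)/N with hpdef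
    set q : ℝ := ((b:ℝ)+1)/N with hqdef
    set Kr : ℝ := ((n-b-1:ℕ):ℝ) with hKdef
    have hKr : (1:ℝ) ≤ Kr := hKr0
    have hp0 : 0 < p := by rw [hpdef]; positivity
    have hpq : p < q := by
      rw [hpdef, hqdef, div_lt_div_iff_of_pos_right hN]; linarith
    have h1qe : 1 - q = Kr/N := by
      rw [eq_div_iff hN.ne', sub_mul, one_mul, hqdef, div_mul_cancel₀ _ hN.ne', hNe]; ring
    have h1pe : 1 - p = (Kr+1)/N := by
      rw [eq_div_iff hN.ne', sub_mul, one_mul, hpdef, div_mul_cancel₀ _ hN.ne', hNe]; ring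
    have hq1 : q < 1 := by
      have hKN : (0:ℝ) < Kr/N := by positivity
      linarith
    have h1q : 0 < 1 - q := by linarith
    have h1p : 0 < 1 - p := by linarith
    have hsplit : ∑ i ∈ Finset.range (b+1), (n.choose i : ℝ) * p^i * (1-p)^(n-i)
        = (∑ i ∈ Finset.range b, (n.choose i : ℝ) * p^i * (1-p)^(n-i))
          + (n.choose b : ℝ) * p^b * (1-p)^(n-b) := Finset.sum_range_succ _ b
    -- FTC for phi
    have hderiv : ∀ t ∈ Set.uIcc p q,
        HasDerivAt (fun x : ℝ => ∑ i ∈ Finset.range (b+1), (n.choose i : ℝ) * x^i * (1-x)^(n-i))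
          (-(((n-b) * n.choose b : ℕ) : ℝ) * (t^b * (1-t)^(n-b-1))) t :=
      fun t _ => phi_deriv n b t
    have hcont1 : Continuous fun t:ℝ => -(((n-b) * n.choose b : ℕ) : ℝ) * (t^b * (1-t)^(n-b-1)) := by
      fun_prop
    have hFTC := intervalIntegral.integral_eq_sub_of_hasDerivAt hderiv
      (hcont1.intervalIntegrable p q)
    rw [intervalIntegral.integral_const_mul] at hFTC
    -- pointwise exponential bound
    set F : ℝ → ℝ := fun t => (b:ℝ)*(Real.log t - Real.log p)
        + Kr*(Real.log (1-t) - Real.log (1-p)) with hFdef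
    have hpt : ∀ t ∈ Set.Icc p q, p^b*(1-p)^(n-b-1) * (1 + F t) ≤ t^b*(1-t)^(n-b-1) := by
      intro t ht
      have ht0 : 0 < t := lt_of_lt_of_le hp0 ht.1
      have ht1 : 0 < 1 - t := by
        have := ht.2; linarith
      have hexp : t^b*(1-t)^(n-b-1) = p^b*(1-p)^(n-b-1) * Real.exp (F t) := by
        rw [hFdef]
        simp only []
        rw [Real.exp_add, hKdef, Real.exp_nat_mul, Real.exp_nat_mul, Real.exp_sub, Real.exp_sub,
          Real.exp_log ht0, Real.exp_log hp0, Real.exp_log ht1, Real.exp_log h1p,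
          div_pow t p b, div_pow (1-t) (1-p) (n-b-1)]
        field_simp
      rw [hexp]
      have := Real.add_one_le_exp (F t)
      have hpos : (0:ℝ) ≤ p^b*(1-p)^(n-b-1) := by positivity
      nlinarith [this, hpos]
    -- integrability of 1 + F
    have hlog1 : ContinuousOn (fun t:ℝ => Real.log t) (Set.Icc p q) :=
      ContinuousOn.log continuousOn_id (fun t ht => ne_of_gt (lt_of_lt_of_le hp0 ht.1))
    have hlog2 : ContinuousOn (fun t:ℝ => Real.log (1-t)) (Set.Icc p q) :=
      ContinuousOn.log (by fun_prop) (fun t ht => by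
        have := ht.2
        have : 0 < 1 - t := by linarith
        exact ne_of_gt this)
    have hcontF : ContinuousOn (fun t:ℝ => 1 + F t) (Set.Icc p q) := by
      rw [hFdef]
      exact continuousOn_const.add
        (((hlog1.sub continuousOn_const).const_smul ((b:ℝ))).add
          ((hlog2.sub continuousOn_const).const_smul Kr))
    have hint1F : IntervalIntegrable (fun t:ℝ => 1 + F t) MeasureTheory.volume p q := by
      apply ContinuousOn.intervalIntegrable
      rwa [Set.uIcc_of_le hpq.le]
    have hintlhs : IntervalIntegrable (fun t:ℝ => p^b*(1-p)^(n-b-1) * (1 + F t))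
        MeasureTheory.volume p q := hint1F.const_mul _
    have hmono := intervalIntegral.integral_mono_on hpq.le hintlhs
      ((by fun_prop : Continuous fun t:ℝ => t^b*(1-t)^(n-b-1)).intervalIntegrable p q) hpt
    rw [intervalIntegral.integral_const_mul] at hmono
    -- antiderivative of 1 + F
    have hAderiv : ∀ t ∈ Set.uIcc p q,
        HasDerivAt (fun t:ℝ => t + (b:ℝ)*(t*Real.log t - t - t*Real.log p)
          + Kr*(-((1-t)*Real.log (1-t)) - t - t*Real.log (1-p))) (1 + F t) t := by
      intro t ht
      rw [Set.uIcc_of_le hpq.le] at ht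
      have ht0 : 0 < t := lt_of_lt_of_le hp0 ht.1
      have ht1 : 0 < 1 - t := by have := ht.2; linarith
      have d1 : HasDerivAt (fun t:ℝ => t * Real.log t) (Real.log t + 1) t := by
        have := (hasDerivAt_id t).mul (Real.hasDerivAt_log ht0.ne')
        convert this using 1
        · rfl
        · rfl
        · rfl
        field_simp
        simp only [id_eq]; ring
      have d2 : HasDerivAt (fun t:ℝ => (1-t) * Real.log (1-t)) (-Real.log (1-t) - 1) t := by
        have hinner : HasDerivAt (fun t:ℝ => 1-t) (-1) t := (hasDerivAt_id t).const_sub 1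
        have hlog : HasDerivAt (fun t:ℝ => Real.log (1-t)) (-1/(1-t)) t := by
          have := hinner.log ht1.ne'
          convert this using 1
        have := hinner.mul hlog
        convert this using 1
        · rfl
        · rfl
        · rfl
        field_simp
        ring
      have d3 : HasDerivAt (fun t:ℝ => t*Real.log p) (Real.log p) t := by
        simpa using (hasDerivAt_id t).mul_const (Real.log p)
      have d4 : HasDerivAt (fun t:ℝ => t*Real.log (1-p)) (Real.log (1-p)) t := by
        simpa using (hasDerivAt_id t).mul_const (Real.log (1-p))
      have dB : HasDerivAt (fun t:ℝ => t*Real.log t - t - t*Real.log p)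
          (Real.log t - Real.log p) t := by
        have := (d1.sub (hasDerivAt_id t)).sub d3
        convert this using 1
        · rfl
        · rfl
        · rfl
        ring
      have dK : HasDerivAt (fun t:ℝ => -((1-t)*Real.log (1-t)) - t - t*Real.log (1-p))
          (Real.log (1-t) - Real.log (1-p)) t := by
        have := (d2.neg.sub (hasDerivAt_id t)).sub d4
        convert this using 1
        · rfl
        · rfl
        · rfl
        ring
      have := ((hasDerivAt_id t).add (dB.const_mul ((b:ℝ)))).add (dK.const_mul Kr)
      convert this using 1
      · rfl
      · rfl
      · rfl
      rw [hFdef]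
      simp only []
      ring
    have hintA0 := intervalIntegral.integral_eq_sub_of_hasDerivAt hAderiv hint1F
    have hintA : (∫ t in p..q, (1 + F t))
        = (q + (b:ℝ)*(q*Real.log q - q - q*Real.log p)
          + Kr*(-((1-q)*Real.log (1-q)) - q - q*Real.log (1-p)))
        - (p + (b:ℝ)*(p*Real.log p - p - p*Real.log p)
          + Kr*(-((1-p)*Real.log (1-p)) - p - p*Real.log (1-p))) := hintA0
    -- closed form for A q - A p
    have hb0 : (b:ℝ) ≠ 0 := by linarith
    have hb10 : (b:ℝ)+1 ≠ 0 := by linarith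
    have hk0 : Kr ≠ 0 := by linarith
    have hk10 : Kr+1 ≠ 0 := by linarith
    have hGH := GH_pos b (n-b-1) hb hk1 hkb
    rw [← hKdef] at hGH
    have hAqp : (q + (b:ℝ)*(q*Real.log q - q - q*Real.log p)
          + Kr*(-((1-q)*Real.log (1-q)) - q - q*Real.log (1-p)))
        - (p + (b:ℝ)*(p*Real.log p - p - p*Real.log p)
          + Kr*(-((1-p)*Real.log (1-p)) - p - p*Real.log (1-p)))
        = (1 + ((b:ℝ)*((b:ℝ)+1) * Real.log (((b:ℝ)+1)/(b:ℝ)) - (b:ℝ)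
            + Kr^2 * Real.log ((Kr+1)/Kr) - Kr))/N := by
      rw [h1qe, h1pe, hpdef, hqdef,
        Real.log_div hb0 hN.ne', Real.log_div hb10 hN.ne',
        Real.log_div hk0 hN.ne', Real.log_div hk10 hN.ne',
        Real.log_div hb10 hb0, Real.log_div hk10 hk0, hNe]
      field_simp
      ring
    rw [hAqp] at hintA
    -- combine
    have hposI : (0:ℝ) < p^b * (1-p)^(n-b-1) := by positivity
    have hc : (0:ℝ) < (((n-b) * n.choose b : ℕ):ℝ) := by
      have : 0 < (n-b) * n.choose b := Nat.mul_pos (by omega) (Nat.choose_pos (by omega))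
      exact_mod_cast this
    have hA_gt : 1/N < (1 + ((b:ℝ)*((b:ℝ)+1) * Real.log (((b:ℝ)+1)/(b:ℝ)) - (b:ℝ)
            + Kr^2 * Real.log ((Kr+1)/Kr) - Kr))/N :=
      (div_lt_div_iff_of_pos_right hN).2 (by linarith)
    have hint_ge : p^b*(1-p)^(n-b-1) * (1/N) < ∫ t in p..q, t^b*(1-t)^(n-b-1) := by
      calc p^b*(1-p)^(n-b-1) * (1/N)
          < p^b*(1-p)^(n-b-1) * ((1 + ((b:ℝ)*((b:ℝ)+1) * Real.log (((b:ℝ)+1)/(b:ℝ)) - (b:ℝ)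
              + Kr^2 * Real.log ((Kr+1)/Kr) - Kr))/N) :=
            mul_lt_mul_of_pos_left hA_gt hposI
        _ = p^b*(1-p)^(n-b-1) * ∫ t in p..q, (1 + F t) := by rw [hintA]
        _ ≤ _ := hmono
    have hcast : (((n-b) * n.choose b : ℕ):ℝ) = (Kr+1) * (n.choose b:ℝ) := by
      rw [hKdef, hnb]; push_cast; ring
    have hT : (n.choose b:ℝ) * p^b * (1-p)^(n-b)
        = (((n-b) * n.choose b : ℕ):ℝ) * (p^b*(1-p)^(n-b-1) * (1/N)) := by
      have hexp2 : (1-p)^(n-b) = (1-p)^(n-b-1) * (1-p) := by rw [← pow_succ, ← hnb]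
      rw [hexp2, h1pe, hcast]
      ring
    have hTc : (n.choose b:ℝ) * p^b * (1-p)^(n-b)
        < (((n-b) * n.choose b : ℕ):ℝ) * ∫ t in p..q, t^b*(1-t)^(n-b-1) := by
      rw [hT]
      exact mul_lt_mul_of_pos_left hint_ge hc
    linarith [hFTC, hsplit, hTc]
end

section
/- For all positive integers b and n with b + 1 ≤ n, one has p_{b+1,n} − p_{b,n} = [((b+1)/n)^b (1−(b+1)/n)^{n−b} − b·∫_{1−(b+1)/n}^{1−b/n} (1−z)^{b−1} z^{n−b} dz] / [b·∫_0^1 (1−z)^{b−1} z^{n−b} dz]. -/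
open Finset

lemma binomSum_hasDerivAt (n b : ℕ) (hb : b ≤ n) (t : ℝ) :
    HasDerivAt (fun x : ℝ => ∑ i ∈ Finset.range b, (n.choose i : ℝ) * x ^ i * (1 - x) ^ (n - i))
      (-((b : ℝ) * (n.choose b : ℝ) * (t ^ (b - 1) * (1 - t) ^ (n - b)))) t := by
  have key : ∀ i ∈ Finset.range b,
      HasDerivAt (fun x : ℝ => (n.choose i : ℝ) * x ^ i * (1 - x) ^ (n - i))
        (((i : ℝ) * (n.choose i : ℝ) * (t ^ (i - 1) * (1 - t) ^ (n - i))) -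
          (((i + 1 : ℕ) : ℝ) * (n.choose (i + 1) : ℝ) * (t ^ (i + 1 - 1) * (1 - t) ^ (n - (i + 1))))) t := by
    intro i hi
    have hi' : i < b := Finset.mem_range.mp hi
    have h1 : HasDerivAt (fun x : ℝ => (n.choose i : ℝ) * x ^ i)
        ((n.choose i : ℝ) * ((i : ℝ) * t ^ (i - 1))) t := (hasDerivAt_pow i t).const_mul _
    have h2 : HasDerivAt (fun x : ℝ => (1 - x) ^ (n - i))
        (((n - i : ℕ) : ℝ) * (1 - t) ^ (n - i - 1) * (-1)) t := by
      exact (((hasDerivAt_id t).const_sub 1).pow (n - i))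
    have h := h1.fun_mul h2
    convert h using 1
    case e'_4 => rfl
    case e'_5 => rfl
    have hido : (n.choose (i + 1) : ℝ) * ((i : ℝ) + 1) = (n.choose i : ℝ) * ((n - i : ℕ) : ℝ) := by
      have := Nat.choose_succ_right_eq n i
      exact_mod_cast congrArg (Nat.cast (R := ℝ)) this
    have hexp : n - (i + 1) = n - i - 1 := by omega
    rw [hexp]
    push_cast

    linear_combination (-(t ^ i * (1 - t) ^ (n - i - 1))) * hido
  have h := HasDerivAt.fun_sum key
  convert h using 1
  case e'_4 => rfl
  case e'_5 => rfl
  rw [Finset.sum_range_sub' (fun j => (j : ℝ) * (n.choose j : ℝ) * (t ^ (j - 1) * (1 - t) ^ (n - j))) b]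
  simp

lemma binomSum_integral (n b : ℕ) (hb : b ≤ n) (p q : ℝ) :
    (∑ i ∈ Finset.range b, (n.choose i : ℝ) * q ^ i * (1 - q) ^ (n - i)) -
      (∑ i ∈ Finset.range b, (n.choose i : ℝ) * p ^ i * (1 - p) ^ (n - i)) =
    -((b : ℝ) * (n.choose b : ℝ)) * ∫ t in p..q, t ^ (b - 1) * (1 - t) ^ (n - b) := by
  have key := intervalIntegral.integral_eq_sub_of_hasDerivAt
    (f := fun x : ℝ => ∑ i ∈ Finset.range b, (n.choose i : ℝ) * x ^ i * (1 - x) ^ (n - i))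
    (f' := fun t => -((b : ℝ) * (n.choose b : ℝ) * (t ^ (b - 1) * (1 - t) ^ (n - b))))
    (a := p) (b := q)
    (fun t _ => binomSum_hasDerivAt n b hb t)
    (((continuous_const.mul ((continuous_pow _).mul
      ((continuous_const.sub continuous_id).pow _))).neg).intervalIntegrable _ _)
  rw [← key, ← intervalIntegral.integral_const_mul]
  exact intervalIntegral.integral_congr fun x _ => by ring

lemma integral_subst (n b : ℕ) (p q : ℝ) :
    (∫ z in (1 - q)..(1 - p), (1 - z) ^ (b - 1) * z ^ (n - b)) =
    ∫ t in p..q, t ^ (b - 1) * (1 - t) ^ (n - b) := by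
  have h := intervalIntegral.integral_comp_sub_left
    (a := 1 - q) (b := 1 - p) (fun t => t ^ (b - 1) * (1 - t) ^ (n - b)) 1
  simp only [sub_sub_cancel] at h
  rw [← h]

theorem p_difference_integral_expression (b n : ℕ) (hb : 0 < b) (hbn : b + 1 ≤ n) :
    binP (b + 1) n - binP b n =
      ((((b : ℝ) + 1) / n) ^ b * (1 - ((b : ℝ) + 1) / n) ^ (n - b) -
          (b : ℝ) * ∫ z in (1 - ((b : ℝ) + 1) / n)..(1 - (b : ℝ) / n),
            (1 - z) ^ (b - 1) * z ^ (n - b)) /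
        ((b : ℝ) * ∫ z in (0 : ℝ)..1, (1 - z) ^ (b - 1) * z ^ (n - b)) := by
  have hbn' : b ≤ n := le_of_lt (Nat.lt_of_succ_le hbn)
  have hCpos : (0:ℝ) < (n.choose b : ℝ) := by exact_mod_cast Nat.choose_pos hbn'
  have hf0 : (∑ i ∈ Finset.range b, (n.choose i : ℝ) * (0:ℝ) ^ i * (1 - 0) ^ (n - i)) = 1 := by
    rw [Finset.sum_eq_single_of_mem 0 (Finset.mem_range.mpr hb)]
    · simp
    · intro i _ hi; simp [zero_pow hi]
  have hf1 : (∑ i ∈ Finset.range b, (n.choose i : ℝ) * (1:ℝ) ^ i * (1 - 1) ^ (n - i)) = 0 := by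
    apply Finset.sum_eq_zero
    intro i hi
    have hni : n - i ≠ 0 := by have := Finset.mem_range.mp hi; omega
    simp [zero_pow hni]
  have hden0 := binomSum_integral n b hbn' 0 1
  rw [hf0, hf1] at hden0
  have hsub01 := integral_subst n b 0 1
  norm_num at hsub01
  have hden : (b:ℝ) * ∫ z in (0:ℝ)..1, (1 - z) ^ (b - 1) * z ^ (n - b)
      = 1 / (n.choose b : ℝ) := by
    rw [hsub01]
    field_simp
    nlinarith [hden0]
  have hsub := integral_subst n b ((b:ℝ)/n) (((b:ℝ)+1)/n)
  have hnum := binomSum_integral n b hbn' ((b:ℝ)/n) (((b:ℝ)+1)/n)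
  have hbp : binP (b+1) n =
      (∑ i ∈ Finset.range b, (n.choose i : ℝ) * (((b:ℝ)+1)/n) ^ i
          * (1 - ((b:ℝ)+1)/n) ^ (n - i))
        + (n.choose b : ℝ) * (((b:ℝ)+1)/n) ^ b * (1 - ((b:ℝ)+1)/n) ^ (n - b) := by
    rw [binP, Finset.sum_range_succ]
    push_cast
    ring_nf
  rw [hbp, binP, hden, hsub, eq_div_iff (by positivity : (1:ℝ) / (n.choose b : ℝ) ≠ 0),
    mul_one_div, div_eq_iff hCpos.ne']
  linear_combination hnum
end

section
/- For all positive integers b and n with b ≤ n, one has z_{b,n} = (1/2)·b·(∫_{1−b/n}^1 (1−z)^{b−1} z^{n−b} dz − ∫_0^{1−b/n} (1−z)^{b−1} z^{n−b} dz) / ((b/n)^b (1−b/n)^{n−b}). -/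
open Finset

lemma tele_sum (n b : ℕ) (hb : 1 ≤ b) (hbn : b ≤ n) (z : ℝ) :
    ∑ i ∈ Finset.range b, (n.choose i : ℝ) *
        (-(i : ℝ) * (1 - z) ^ (i - 1) * z ^ (n - i)
          + ((n : ℝ) - i) * (1 - z) ^ i * z ^ (n - i - 1))
      = (b : ℝ) * (n.choose b : ℝ) * ((1 - z) ^ (b - 1) * z ^ (n - b)) := by
  induction b, hb using Nat.le_induction with
  | base => simp [Nat.choose_one_right]
  | succ b hb ih =>
    have hbn' : b ≤ n := by omega
    have hkey : (n.choose b : ℝ) * ((n : ℝ) - b) = ((b : ℝ) + 1) * (n.choose (b + 1) : ℝ) := by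
      have h := Nat.choose_succ_right_eq n b
      have hc : ((n.choose (b + 1) : ℝ)) * ((b : ℝ) + 1)
          = (n.choose b : ℝ) * (((n - b : ℕ)) : ℝ) := by exact_mod_cast h
      rw [Nat.cast_sub hbn'] at hc
      linarith
    rw [Finset.sum_range_succ, ih hbn']
    have e1 : b + 1 - 1 = b := rfl
    have e2 : n - (b + 1) = n - b - 1 := by omega
    rw [e1, e2]
    push_cast
    linear_combination ((1 - z) ^ b * z ^ (n - b - 1)) * hkey

lemma hasDerivAt_S (n b : ℕ) (hb : 1 ≤ b) (hbn : b ≤ n) (z : ℝ) :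
    HasDerivAt (fun z : ℝ => ∑ i ∈ Finset.range b, (n.choose i : ℝ) * (1 - z) ^ i * z ^ (n - i))
      ((b : ℝ) * (n.choose b : ℝ) * ((1 - z) ^ (b - 1) * z ^ (n - b))) z := by
  have h : ∀ i ∈ Finset.range b,
      HasDerivAt (fun z : ℝ => (n.choose i : ℝ) * (1 - z) ^ i * z ^ (n - i))
        ((n.choose i : ℝ) *
          (-(i : ℝ) * (1 - z) ^ (i - 1) * z ^ (n - i)
            + ((n : ℝ) - i) * (1 - z) ^ i * z ^ (n - i - 1))) z := by
    intro i hi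
    have hi' : i ≤ n := le_trans (le_of_lt (Finset.mem_range.mp hi)) hbn
    have h1 : HasDerivAt (fun z : ℝ => (1 - z) ^ i) ((i : ℝ) * (1 - z) ^ (i - 1) * (-1)) z :=
      ((hasDerivAt_id z).const_sub 1).pow i
    have h2 : HasDerivAt (fun z : ℝ => z ^ (n - i)) (((n - i : ℕ) : ℝ) * z ^ (n - i - 1)) z :=
      hasDerivAt_pow (n - i) z
    have h3 := (h1.const_mul (n.choose i : ℝ)).fun_mul h2
    convert h3 using 1
    · rfl
    · rfl
    push_cast [Nat.cast_sub hi']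
    ring
  have H := HasDerivAt.fun_sum h
  rwa [tele_sum n b hb hbn z] at H

theorem z_integral_expression (b n : ℕ) (hb : 0 < b) (hbn : b ≤ n) :
    binZ b n =
      (1 / 2) * (b : ℝ) *
        ((∫ z in (1 - (b : ℝ) / n)..1, (1 - z) ^ (b - 1) * z ^ (n - b)) -
          ∫ z in (0 : ℝ)..(1 - (b : ℝ) / n), (1 - z) ^ (b - 1) * z ^ (n - b)) /
        (((b : ℝ) / n) ^ b * (1 - (b : ℝ) / n) ^ (n - b)) := by
  have hn : 0 < n := lt_of_lt_of_le hb hbn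
  set S : ℝ → ℝ := fun z => ∑ i ∈ Finset.range b, (n.choose i : ℝ) * (1 - z) ^ i * z ^ (n - i)
    with hS
  have hC : (0 : ℝ) < (n.choose b : ℝ) := by
    exact_mod_cast Nat.choose_pos hbn
  have hint : ∀ a c : ℝ,
      (b : ℝ) * (n.choose b : ℝ) * ∫ z in a..c, (1 - z) ^ (b - 1) * z ^ (n - b)
        = S c - S a := by
    intro a c
    have hcont : Continuous fun z : ℝ =>
        (b : ℝ) * (n.choose b : ℝ) * ((1 - z) ^ (b - 1) * z ^ (n - b)) := by
      continuity
    have h := intervalIntegral.integral_eq_sub_of_hasDerivAt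
      (f := S) (a := a) (b := c)
      (fun z _ => hasDerivAt_S n b hb hbn z)
      (hcont.intervalIntegrable a c)
    rw [intervalIntegral.integral_const_mul] at h
    exact h
  have hS1 : S 1 = 1 := by
    simp only [hS]
    rw [Finset.sum_eq_single_of_mem 0 (Finset.mem_range.mpr hb)]
    · simp
    · intro i _ hi0
      simp [zero_pow hi0]
  have hS0 : S 0 = 0 := by
    simp only [hS]
    apply Finset.sum_eq_zero
    intro i hi
    have hni : n - i ≠ 0 := by
      have := Finset.mem_range.mp hi; omega
    simp [zero_pow hni]
  have hSq : S (1 - (b : ℝ) / n) = binP b n := by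
    rw [hS, binP]
    simp only [sub_sub_cancel]
  have h1 : (b : ℝ) * (n.choose b : ℝ) *
      ∫ z in (1 - (b : ℝ) / n)..1, (1 - z) ^ (b - 1) * z ^ (n - b)
      = 1 - binP b n := by rw [hint (1 - (b : ℝ) / n) 1, hS1, hSq]
  have h2 : (b : ℝ) * (n.choose b : ℝ) *
      ∫ z in (0 : ℝ)..(1 - (b : ℝ) / n), (1 - z) ^ (b - 1) * z ^ (n - b)
      = binP b n := by rw [hint 0 (1 - (b : ℝ) / n), hS0, hSq]; ring
  have e : (1 / 2 : ℝ) * (b : ℝ) *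
      ((∫ z in (1 - (b : ℝ) / n)..1, (1 - z) ^ (b - 1) * z ^ (n - b)) -
        ∫ z in (0 : ℝ)..(1 - (b : ℝ) / n), (1 - z) ^ (b - 1) * z ^ (n - b))
      = (1 / 2 - binP b n) / (n.choose b : ℝ) := by
    rw [eq_div_iff (ne_of_gt hC)]
    linear_combination (1 / 2) * h1 - (1 / 2) * h2
  rw [e, div_div, binZ, mul_assoc]
end
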